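/- arXiv:2104.11527 — 5 statements merged into one kernel-verified Lean document; each statement's English description precedes it below -/
import Mathlib

section
/- Let n ≥ 3 be an integer, let N > n be real, and let v₀ > 0 be the unique positive root of sinh(n·v) = N·sinh(v). Define h(v) = sinh²(nv) - N²·sinh²(v). Then h is negative on (0, v₀), vanishes at v = 0 and at v = v₀, and is positive and strictly increasing on (v₀, ∞). -/
open Real Set

private lemma keyK (n : ℕ) (hn : 2 ≤ n) (v : ℝ) (hv : 0 < v) :
    Real.sinh ((n : ℝ) * v) * Real.cosh v < (n : ℝ) * (Real.cosh ((n : ℝ) * v) * Real.sinh v) := by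
  induction n, hn using Nat.le_induction with
  | base =>
    have h2 : ((2 : ℕ) : ℝ) * v = v + v := by push_cast; ring
    rw [h2, Real.sinh_add, Real.cosh_add]
    have hs : 0 < Real.sinh v := Real.sinh_pos_iff.2 hv
    push_cast
    nlinarith [mul_pos (mul_pos hs hs) hs]
  | succ m hm ih =>
    have hstep : ((m + 1 : ℕ) : ℝ) * v = (m : ℝ) * v + v := by push_cast; ring
    rw [hstep, Real.sinh_add, Real.cosh_add]
    have hs : 0 < Real.sinh v := Real.sinh_pos_iff.2 hv
    have hsn : 0 < Real.sinh ((m : ℝ) * v) := Real.sinh_pos_iff.2 (by positivity)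
    have hc : 0 < Real.cosh v := Real.cosh_pos _
    have hcn : 0 < Real.cosh ((m : ℝ) * v) := Real.cosh_pos _
    push_cast
    nlinarith [mul_pos hsn hs, mul_pos (mul_pos hsn hs) hs]

private lemma g_mono (n : ℕ) (hn : 2 ≤ n) :
    StrictMonoOn (fun v => Real.sinh ((n : ℝ) * v) / Real.sinh v) (Set.Ioi (0:ℝ)) := by
  apply strictMonoOn_of_deriv_pos (convex_Ioi 0)
  · apply ContinuousOn.div
    · exact (Real.continuous_sinh.comp (continuous_const.mul continuous_id)).continuousOn
    · exact Real.continuous_sinh.continuousOn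
    · intro x hx
      exact (Real.sinh_pos_iff.2 hx).ne'
  · intro x hx
    rw [interior_Ioi] at hx
    have hx0 : (0:ℝ) < x := hx
    have hsx : 0 < Real.sinh x := Real.sinh_pos_iff.2 hx0
    have h1 : HasDerivAt (fun v : ℝ => Real.sinh ((n : ℝ) * v))
        (Real.cosh ((n : ℝ) * x) * (n : ℝ)) x := by
      have h0 : HasDerivAt (fun v : ℝ => (n : ℝ) * v) ((n : ℝ)) x := by
        simpa using (hasDerivAt_id x).const_mul (n : ℝ)
      have h0' := (Real.hasDerivAt_sinh ((n : ℝ) * x)).comp x h0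
      exact h0'
    have h2 := h1.div (Real.hasDerivAt_sinh x) hsx.ne'
    rw [(show HasDerivAt (fun v => Real.sinh ((n:ℝ) * v) / Real.sinh v) _ x from h2).deriv]
    apply div_pos
    · have := keyK n hn x hx0
      nlinarith
    · positivity

theorem h_sign_of_N_gt_n (n : ℕ) (hn : 3 ≤ n) (N : ℝ) (hNn : (n : ℝ) < N)
    (v₀ : ℝ) (hv₀ : 0 < v₀) (hroot : Real.sinh (n * v₀) = N * Real.sinh v₀)
    (h : ℝ → ℝ)
    (hh : ∀ v : ℝ, h v = Real.sinh (n * v) ^ 2 - N ^ 2 * Real.sinh v ^ 2) :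
    (∀ v ∈ Set.Ioo 0 v₀, h v < 0) ∧ h 0 = 0 ∧ h v₀ = 0 ∧
    (∀ v : ℝ, v₀ < v → 0 < h v) ∧ StrictMonoOn h (Set.Ioi v₀) := by
  have hn2 : 2 ≤ n := by omega
  have hnpos : (0:ℝ) < (n:ℝ) := by exact_mod_cast (by omega : 0 < n)
  have gm := g_mono n hn2
  have hsv₀ : 0 < Real.sinh v₀ := Real.sinh_pos_iff.2 hv₀
  have hg₀ : Real.sinh ((n : ℝ) * v₀) / Real.sinh v₀ = N := by
    rw [hroot]; field_simp
  -- below root: sinh(nv) < N sinh v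
  have hbelow : ∀ v ∈ Set.Ioo (0:ℝ) v₀, Real.sinh ((n:ℝ) * v) < N * Real.sinh v := by
    intro v hv
    have hsv : 0 < Real.sinh v := Real.sinh_pos_iff.2 hv.1
    have := gm hv.1 (Set.mem_Ioi.2 hv₀) hv.2
    dsimp only at this
    rw [hg₀] at this
    calc Real.sinh ((n:ℝ) * v) = Real.sinh ((n:ℝ) * v) / Real.sinh v * Real.sinh v := by
          field_simp
      _ < N * Real.sinh v := by exact mul_lt_mul_of_pos_right this hsv
  have habove : ∀ v : ℝ, v₀ < v → N * Real.sinh v < Real.sinh ((n:ℝ) * v) := by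
    intro v hv
    have hv0 : (0:ℝ) < v := hv₀.trans hv
    have hsv : 0 < Real.sinh v := Real.sinh_pos_iff.2 hv0
    have := gm (Set.mem_Ioi.2 hv₀) (Set.mem_Ioi.2 hv0) hv
    dsimp only at this
    rw [hg₀] at this
    calc N * Real.sinh v < Real.sinh ((n:ℝ) * v) / Real.sinh v * Real.sinh v :=
          mul_lt_mul_of_pos_right this hsv
      _ = Real.sinh ((n:ℝ) * v) := by field_simp
  refine ⟨?_, ?_, ?_, ?_, ?_⟩
  · intro v hv
    have hsv : 0 < Real.sinh v := Real.sinh_pos_iff.2 hv.1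
    have hsnv : 0 < Real.sinh ((n:ℝ) * v) := Real.sinh_pos_iff.2 (mul_pos hnpos hv.1)
    have := hbelow v hv
    rw [hh v]
    nlinarith [hsnv, hsv, this]
  · rw [hh 0]; simp
  · rw [hh v₀, hroot]; ring
  · intro v hv
    have hv0 : (0:ℝ) < v := hv₀.trans hv
    have hsv : 0 < Real.sinh v := Real.sinh_pos_iff.2 hv0
    have := habove v hv
    have hN0 : (0:ℝ) < N := lt_of_le_of_lt (Nat.cast_nonneg n) hNn
    rw [hh v]
    nlinarith [mul_pos hN0 hsv, this]
  · apply strictMonoOn_of_deriv_pos (convex_Ioi v₀)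
    · rw [show h = fun v => Real.sinh ((n:ℝ) * v) ^ 2 - N ^ 2 * Real.sinh v ^ 2 from funext hh]
      exact (((Real.continuous_sinh.comp (continuous_const.mul continuous_id)).pow 2).sub
        (continuous_const.mul (Real.continuous_sinh.pow 2))).continuousOn
    · intro x hx
      rw [interior_Ioi] at hx
      have hx0 : (0:ℝ) < x := hv₀.trans hx
      have hsx : 0 < Real.sinh x := Real.sinh_pos_iff.2 hx0
      have hsnx : 0 < Real.sinh ((n:ℝ) * x) := Real.sinh_pos_iff.2 (mul_pos hnpos hx0)
      have h1 : HasDerivAt (fun v : ℝ => Real.sinh ((n : ℝ) * v))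
          (Real.cosh ((n : ℝ) * x) * (n : ℝ)) x := by
        have h0 : HasDerivAt (fun v : ℝ => (n : ℝ) * v) ((n : ℝ)) x := by
          simpa using (hasDerivAt_id x).const_mul (n : ℝ)
        have h0' := (Real.hasDerivAt_sinh ((n : ℝ) * x)).comp x h0
        exact h0'
      have hD : HasDerivAt h
          (2 * Real.sinh ((n:ℝ) * x) * (Real.cosh ((n:ℝ) * x) * (n:ℝ))
            - N ^ 2 * (2 * Real.sinh x * Real.cosh x)) x := by
        have h2 := (h1.pow 2).sub (((Real.hasDerivAt_sinh x).pow 2).const_mul (N ^ 2))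
        have heq : h = fun v => Real.sinh ((n:ℝ) * v) ^ 2 - N ^ 2 * Real.sinh v ^ 2 :=
          funext hh
        rw [heq]
        refine HasDerivAt.congr_deriv h2 ?_
        ring
      rw [hD.deriv]
      have hK := keyK n hn2 x hx0
      have hA := habove x hx
      have hcx : 0 < Real.cosh x := Real.cosh_pos _
      have hcnx : 0 < Real.cosh ((n:ℝ) * x) := Real.cosh_pos _
      have hN0 : (0:ℝ) < N := lt_of_le_of_lt (Nat.cast_nonneg n) hNn
      -- n cosh(nx) ≥ sinh(nx) cosh x / sinh x > N cosh x
      have key1 : N * Real.cosh x * Real.sinh x < (n:ℝ) * Real.cosh ((n:ℝ)*x) * Real.sinh x := by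
        nlinarith [mul_pos hN0 hsx]
      nlinarith [mul_pos hsx hcx, mul_pos hN0 hsx, mul_pos (mul_pos hN0 hsx) hcx,
        mul_pos hsnx hcx]
end

section
/- Let n ≥ 3 be an integer. Then the maximum value N_min(n) of |U_{n-1}(x)| over the interval [-cos(π/n), cos(π/n)] satisfies 1 ≤ N_min(n) < n, and it is attained at a point x'_0 in the open interval (cos(2π/n), cos(π/n)) at which U'_{n-1} vanishes. -/
open Polynomial Polynomial.Chebyshev Real

private lemma sin_interval_le {a θ : ℝ} (ha : 0 ≤ a) (h1 : a ≤ θ) (h2 : θ ≤ π - a) :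
    Real.sin a ≤ Real.sin θ := by
  rcases le_or_gt θ (π / 2) with h | h
  · exact Real.strictMonoOn_sin.monotoneOn ⟨by linarith, by linarith⟩ ⟨by linarith, h⟩ h1
  · have hπ := Real.pi_pos
    rw [← Real.sin_pi_sub θ]
    exact Real.strictMonoOn_sin.monotoneOn ⟨by linarith, by linarith⟩
      ⟨by linarith, by linarith⟩ (by linarith)

private lemma sin_interval_lt {a θ : ℝ} (ha : 0 ≤ a) (h1 : a < θ) (h2 : θ < π - a) :
    Real.sin a < Real.sin θ := by
  rcases le_or_gt θ (π / 2) with h | h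
  · exact Real.strictMonoOn_sin ⟨by linarith, by linarith⟩ ⟨by linarith, h⟩ h1
  · have hπ := Real.pi_pos
    rw [← Real.sin_pi_sub θ]
    exact Real.strictMonoOn_sin ⟨by linarith, by linarith⟩
      ⟨by linarith, by linarith⟩ (by linarith)

set_option maxHeartbeats 1000000 in
theorem Nmin_exists (n : ℕ) (hn : 3 ≤ n) :
    ∃ x₀' ∈ Set.Ioo (Real.cos (2 * π / n)) (Real.cos (π / n)),
      (Polynomial.derivative (U ℝ ((n : ℤ) - 1))).eval x₀' = 0 ∧
      IsMaxOn (fun x : ℝ => |(U ℝ ((n : ℤ) - 1)).eval x|)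
        (Set.Icc (-(Real.cos (π / n))) (Real.cos (π / n))) x₀' ∧
      1 ≤ |(U ℝ ((n : ℤ) - 1)).eval x₀'| ∧ |(U ℝ ((n : ℤ) - 1)).eval x₀'| < (n : ℝ) := by
  have hπ := Real.pi_pos
  have hnR : (3:ℝ) ≤ (n:ℝ) := by exact_mod_cast hn
  have hn0 : (0:ℝ) < n := by linarith
  set p : Polynomial ℝ := U ℝ ((n : ℤ) - 1) with hp
  set a : ℝ := π / n with ha
  have ha0 : 0 < a := div_pos hπ hn0
  have ha3 : 3 * a ≤ π := by
    rw [ha, mul_div_assoc', div_le_iff₀ hn0]; nlinarith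
  have hna : (n : ℝ) * a = π := by rw [ha]; field_simp [hn0.ne']
  -- eval formula
  have hE : ∀ θ : ℝ, p.eval (Real.cos θ) * Real.sin θ = Real.sin ((n:ℝ) * θ) := by
    intro θ
    have h := Polynomial.Chebyshev.U_real_cos θ ((n : ℤ) - 1)
    have : (((n : ℤ) - 1 : ℤ) : ℝ) + 1 = (n : ℝ) := by push_cast; ring
    rwa [this] at h
  -- 2*π/n = 2*a
  have h2a : 2 * π / n = 2 * a := by rw [ha]; ring
  rw [h2a]
  -- cos antitone facts
  have hcos2a_lt : Real.cos (2 * a) < Real.cos a :=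
    Real.cos_lt_cos_of_nonneg_of_le_pi ha0.le (by linarith) (by linarith)
  -- zeros at endpoints
  have hza : p.eval (Real.cos a) = 0 := by
    have h := hE a
    rw [hna, Real.sin_pi] at h
    have hsa : Real.sin a ≠ 0 := (Real.sin_pos_of_pos_of_lt_pi ha0 (by linarith)).ne'
    exact (mul_eq_zero.mp h).resolve_right hsa
  have hz2a : p.eval (Real.cos (2 * a)) = 0 := by
    have h := hE (2 * a)
    have : (n:ℝ) * (2 * a) = 2 * π := by rw [← hna]; ring
    rw [this, Real.sin_two_pi] at h
    have hsa : Real.sin (2 * a) ≠ 0 :=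
      (Real.sin_pos_of_pos_of_lt_pi (by linarith) (by linarith)).ne'
    exact (mul_eq_zero.mp h).resolve_right hsa
  -- max over K := Icc (cos 2a) (cos a)
  set f : ℝ → ℝ := fun x => |p.eval x| with hf
  have hfc : Continuous f := (Polynomial.continuous p).abs
  obtain ⟨x₀, hx₀K, hmax⟩ := isCompact_Icc.exists_isMaxOn
    (Set.nonempty_Icc.mpr hcos2a_lt.le) hfc.continuousOn
    (s := Set.Icc (Real.cos (2*a)) (Real.cos a))
  -- value at cos(3a/2) is 1/sin(3a/2) ≥ 1
  have hm_mem : Real.cos (3*a/2) ∈ Set.Icc (Real.cos (2*a)) (Real.cos a) := by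
    constructor
    · exact Real.cos_le_cos_of_nonneg_of_le_pi (by linarith) (by linarith) (by linarith)
    · exact Real.cos_le_cos_of_nonneg_of_le_pi ha0.le (by linarith) (by linarith)
  have hsm : 0 < Real.sin (3*a/2) :=
    Real.sin_pos_of_pos_of_lt_pi (by linarith) (by linarith)
  have hEm : p.eval (Real.cos (3*a/2)) * Real.sin (3*a/2) = -1 := by
    have h := hE (3*a/2)
    have h32 : (n:ℝ) * (3*a/2) = π + π/2 := by rw [← hna]; ring
    rw [h32, Real.sin_add, Real.sin_pi, Real.cos_pi, Real.sin_pi_div_two] at h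
    linarith [h]
  have hfm : f (Real.cos (3*a/2)) * Real.sin (3*a/2) = 1 := by
    have : |p.eval (Real.cos (3*a/2)) * Real.sin (3*a/2)| = 1 := by rw [hEm]; simp
    rwa [abs_mul, abs_of_pos hsm] at this
  have hsm1 : Real.sin (3*a/2) ≤ 1 := Real.sin_le_one _
  have hfm1 : 1 ≤ f (Real.cos (3*a/2)) := by nlinarith [abs_nonneg (p.eval (Real.cos (3*a/2)))]
  have hM1 : 1 ≤ f x₀ := le_trans hfm1 (hmax hm_mem)
  -- x₀ in open interval
  have hx₀Ioo : x₀ ∈ Set.Ioo (Real.cos (2*a)) (Real.cos a) := by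
    rcases hx₀K with ⟨h1, h2⟩
    constructor
    · rcases h1.lt_or_eq with h | h
      · exact h
      · exfalso; rw [← h, hf] at hM1; simp [hz2a] at hM1; linarith
    · rcases h2.lt_or_eq with h | h
      · exact h
      · exfalso; rw [h, hf] at hM1; simp [hza] at hM1; linarith
  -- θ₀ := arccos x₀ ∈ (a, 2a)
  set θ₀ : ℝ := Real.arccos x₀ with hθ₀
  have hx₀1 : -1 ≤ x₀ := le_trans (Real.neg_one_le_cos _) hx₀Ioo.1.le
  have hx₀2 : x₀ ≤ 1 := le_trans hx₀Ioo.2.le (Real.cos_le_one _)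
  have hcθ₀ : Real.cos θ₀ = x₀ := Real.cos_arccos hx₀1 hx₀2
  have hθ₀1 : a < θ₀ := by
    by_contra h
    push_neg at h
    have := Real.cos_le_cos_of_nonneg_of_le_pi (Real.arccos_nonneg _) (by linarith) h
    rw [hcθ₀] at this; linarith [hx₀Ioo.2]
  have hθ₀2 : θ₀ < 2 * a := by
    by_contra h
    push_neg at h
    have := Real.cos_le_cos_of_nonneg_of_le_pi (by linarith) (Real.arccos_le_pi _) h
    rw [hcθ₀] at this; linarith [hx₀Ioo.1]
  have hsθ₀ : Real.sin a < Real.sin θ₀ := sin_interval_lt ha0.le hθ₀1 (by linarith)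
  have hsθ₀pos : 0 < Real.sin θ₀ := by
    have : 0 < Real.sin a := Real.sin_pos_of_pos_of_lt_pi ha0 (by linarith)
    linarith
  -- M < n
  have hsa2 : 2 / (n:ℝ) ≤ Real.sin a := by
    have := Real.mul_le_sin (x := a) ha0.le (by linarith)
    calc 2 / (n:ℝ) = 2 / π * a := by rw [ha]; field_simp
    _ ≤ Real.sin a := this
  have hMbound : f x₀ * Real.sin θ₀ ≤ 1 := by
    have h := hE θ₀
    rw [hcθ₀] at h
    have : |p.eval x₀ * Real.sin θ₀| = |Real.sin ((n:ℝ) * θ₀)| := by rw [h]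
    rw [abs_mul, abs_of_pos hsθ₀pos] at this
    calc f x₀ * Real.sin θ₀ = |Real.sin ((n:ℝ) * θ₀)| := this
    _ ≤ 1 := Real.abs_sin_le_one _
  have hMn : f x₀ < (n:ℝ) := by
    have h1 : f x₀ * (2 / (n:ℝ)) < 1 :=
      lt_of_lt_of_le (mul_lt_mul_of_pos_left (lt_of_le_of_lt hsa2 hsθ₀) (by linarith)) hMbound
    rw [← mul_div_assoc] at h1
    have h2 : f x₀ * 2 < (n:ℝ) := (div_lt_one hn0).mp h1
    linarith
  -- IsMaxOn over the big interval
  have hbig : IsMaxOn f (Set.Icc (-(Real.cos a)) (Real.cos a)) x₀ := by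
    intro x hx
    simp only [Set.mem_Icc] at hx
    have hx1 : -1 ≤ x := le_trans (by linarith [Real.cos_le_one a]) hx.1
    have hx2 : x ≤ 1 := le_trans hx.2 (Real.cos_le_one a)
    set θ : ℝ := Real.arccos x with hθdef
    have hcθ : Real.cos θ = x := Real.cos_arccos hx1 hx2
    have hθ0 : 0 ≤ θ := Real.arccos_nonneg _
    have hθπ : θ ≤ π := Real.arccos_le_pi _
    have hθa : a ≤ θ := by
      by_contra h
      push_neg at h
      have := Real.cos_lt_cos_of_nonneg_of_le_pi hθ0 (by linarith) h
      rw [hcθ] at this; linarith [hx.2]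
    have hθπa : θ ≤ π - a := by
      by_contra h
      push_neg at h
      have := Real.cos_lt_cos_of_nonneg_of_le_pi (by linarith) hθπ h
      rw [Real.cos_pi_sub, hcθ] at this; linarith [hx.1]
    -- key: f x = |sin nθ| / sin θ
    have hsθ : 0 < Real.sin θ := Real.sin_pos_of_pos_of_lt_pi (by linarith) (by linarith)
    have hfx : f x * Real.sin θ = |Real.sin ((n:ℝ) * θ)| := by
      have h := hE θ
      rw [hcθ] at h
      have : |p.eval x * Real.sin θ| = |Real.sin ((n:ℝ) * θ)| := by rw [h]
      rwa [abs_mul, abs_of_pos hsθ] at this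
    rcases le_or_gt θ (2*a) with hc1 | hc1
    · -- x ∈ K
      have : x ∈ Set.Icc (Real.cos (2*a)) (Real.cos a) := by
        constructor
        · rw [← hcθ]
          exact Real.cos_le_cos_of_nonneg_of_le_pi hθ0 (by linarith) hc1
        · exact hx.2
      exact hmax this
    rcases le_or_gt (π - 2*a) θ with hc2 | hc2
    · -- reflect: use π - θ
      have hmem : Real.cos (π - θ) ∈ Set.Icc (Real.cos (2*a)) (Real.cos a) := by
        constructor
        · exact Real.cos_le_cos_of_nonneg_of_le_pi (by linarith) (by linarith) (by linarith)
        · exact Real.cos_le_cos_of_nonneg_of_le_pi ha0.le (by linarith) (by linarith)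
      have hs' : Real.sin (π - θ) = Real.sin θ := Real.sin_pi_sub θ
      have hfx' : f (Real.cos (π - θ)) * Real.sin θ = |Real.sin ((n:ℝ) * (π - θ))| := by
        have h := hE (π - θ)
        have h2 : |p.eval (Real.cos (π - θ)) * Real.sin (π - θ)|
            = |Real.sin ((n:ℝ) * (π - θ))| := by rw [h]
        rw [abs_mul, hs', abs_of_pos hsθ] at h2
        exact h2
      have hsin_eq : |Real.sin ((n:ℝ) * (π - θ))| = |Real.sin ((n:ℝ) * θ)| := by
        have h1 : (n:ℝ) * (π - θ) = (n:ℕ) * π - (n:ℝ) * θ := by push_cast; ring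
        rw [h1, Real.sin_nat_mul_pi_sub]
        rw [abs_neg, abs_mul, abs_pow, abs_neg, abs_one, one_pow, one_mul]
      have hle : f x ≤ f (Real.cos (π - θ)) := by
        have heq := hfx'.trans (hsin_eq.trans hfx.symm)
        exact le_of_eq (mul_right_cancel₀ hsθ.ne' heq).symm
      exact le_trans hle (hmax hmem)
    · -- middle: 2a < θ < π - 2a
      have hs2a : Real.sin (2*a) ≤ Real.sin θ :=
        sin_interval_le (by linarith) hc1.le hc2.le
      have hsm2a : Real.sin (3*a/2) ≤ Real.sin (2*a) :=
        sin_interval_le (by linarith) (by linarith) (by linarith)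
      have hfxle : f x * Real.sin θ ≤ 1 := by
        rw [hfx]; exact Real.abs_sin_le_one _
      have hM' : f (Real.cos (3*a/2)) ≤ f x₀ := hmax hm_mem
      -- f x * sin(3a/2) ≤ f x * sin θ ≤ 1 = f(cos 3a/2) * sin(3a/2)
      have hfx0 : 0 ≤ f x := abs_nonneg _
      have key : f x * Real.sin (3*a/2) ≤ f (Real.cos (3*a/2)) * Real.sin (3*a/2) := by
        rw [hfm]
        nlinarith
      have : f x ≤ f (Real.cos (3*a/2)) := by
        have := le_of_mul_le_mul_right key hsm
        exact this
      exact le_trans this hM'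
  -- derivative zero
  have hloc : IsLocalMax f x₀ :=
    hmax.isLocalMax (Icc_mem_nhds hx₀Ioo.1 hx₀Ioo.2)
  have hderiv : (Polynomial.derivative p).eval x₀ = 0 := by
    rw [← Polynomial.deriv]
    rcases lt_or_gt_of_ne (fun h : p.eval x₀ = 0 => by rw [hf] at hM1; simp [h] at hM1; linarith)
      with hneg | hpos
    · apply IsLocalMin.deriv_eq_zero
      filter_upwards [hloc] with y hy
      have : |p.eval y| ≤ |p.eval x₀| := hy
      have h2 : |p.eval x₀| = -(p.eval x₀) := abs_of_neg hneg
      calc p.eval x₀ = -|p.eval x₀| := by rw [h2]; ring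
      _ ≤ -|p.eval y| := by linarith
      _ ≤ p.eval y := by
          have := neg_abs_le (p.eval y); linarith
    · apply IsLocalMax.deriv_eq_zero
      filter_upwards [hloc] with y hy
      have : |p.eval y| ≤ |p.eval x₀| := hy
      have h2 : |p.eval x₀| = p.eval x₀ := abs_of_pos hpos
      calc p.eval y ≤ |p.eval y| := le_abs_self _
      _ ≤ p.eval x₀ := by rw [← h2]; exact this
  exact ⟨x₀, hx₀Ioo, hderiv, hbig, hM1, hMn⟩
end

section
/- Let n ≥ 3 be an integer and let N be a real number with N_min(n) < N < n, where N_min(n) is the maximum of |U_{n-1}(x)| over [-cos(π/n), cos(π/n)]. Then the equation |U_{n-1}(x)| = N has exactly one solution x₀ in (0, 1) and exactly one solution in (-1, 0), which equals -x₀; moreover |U_{n-1}(x)| < N for |x| < x₀ and |U_{n-1}(x)| > N for x₀ < |x| ≤ 1. -/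
open Polynomial Polynomial.Chebyshev Real


lemma myU_eval_one : ∀ k : ℕ, (U ℝ (k:ℤ)).eval 1 = (k:ℝ) + 1 := by
  have key : ∀ k : ℕ, (U ℝ (k:ℤ)).eval 1 = (k:ℝ) + 1 ∧ (U ℝ ((k:ℤ)+1)).eval 1 = (k:ℝ) + 2 := by
    intro k
    induction k with
    | zero => norm_num [U_zero, U_one]
    | succ k ih =>
      obtain ⟨h1, h2⟩ := ih
      have e : ((k+1:ℕ):ℤ) = (k:ℤ)+1 := by push_cast; ring
      refine ⟨by rw [e, h2]; push_cast; ring, ?_⟩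
      have e2 : ((k+1:ℕ):ℤ)+1 = (k:ℤ)+2 := by push_cast; ring
      rw [e2, U_add_two]
      simp only [eval_sub, eval_mul, eval_ofNat, eval_X, h1, h2]
      push_cast; ring
  exact fun k => (key k).1

lemma myU_eval_neg (x : ℝ) : ∀ k : ℕ, (U ℝ (k:ℤ)).eval (-x) = (-1)^k * (U ℝ (k:ℤ)).eval x := by
  have key : ∀ k : ℕ, (U ℝ (k:ℤ)).eval (-x) = (-1)^k * (U ℝ (k:ℤ)).eval x ∧
      (U ℝ ((k:ℤ)+1)).eval (-x) = (-1)^(k+1) * (U ℝ ((k:ℤ)+1)).eval x := by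
    intro k
    induction k with
    | zero => norm_num [U_zero, U_one]
    | succ k ih =>
      obtain ⟨h1, h2⟩ := ih
      have e : ((k+1:ℕ):ℤ) = (k:ℤ)+1 := by push_cast; ring
      refine ⟨by rw [e, h2], ?_⟩
      have e2 : ((k+1:ℕ):ℤ)+1 = (k:ℤ)+2 := by push_cast; ring
      rw [e2, U_add_two]
      simp only [eval_sub, eval_mul, eval_ofNat, eval_X, h1, h2]
      ring
  exact fun k => (key k).1


-- |sin kθ| < k sin θ for k ≥ 2, θ ∈ (0,π)
lemma my_abs_sin_lt {θ : ℝ} (h1 : 0 < θ) (h2 : θ < π) :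
    ∀ k : ℕ, 2 ≤ k → |Real.sin ((k:ℝ)*θ)| < (k:ℝ) * Real.sin θ := by
  have hs : 0 < Real.sin θ := Real.sin_pos_of_pos_of_lt_pi h1 h2
  have hc1 : Real.cos θ < 1 := by
    have := Real.strictAntiOn_cos (Set.mem_Icc.2 ⟨le_refl 0, Real.pi_pos.le⟩)
      (Set.mem_Icc.2 ⟨h1.le, h2.le⟩) h1
    simpa using this
  have hc2 : -1 < Real.cos θ := by
    have := Real.strictAntiOn_cos (Set.mem_Icc.2 ⟨h1.le, h2.le⟩)
      (Set.mem_Icc.2 ⟨Real.pi_pos.le, le_refl π⟩) h2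
    simpa using this
  have hcabs : |Real.cos θ| < 1 := abs_lt.2 ⟨hc2, hc1⟩
  intro k hk
  induction k with
  | zero => omega
  | succ k ih =>
    rcases Nat.lt_or_ge k 2 with hk2 | hk2
    · -- k+1 = 2
      interval_cases k
      · omega
      · have e1 : ((1+1:ℕ):ℝ)*θ = 2*θ := by push_cast; ring
        have e2 : ((1+1:ℕ):ℝ) = 2 := by push_cast; ring
        rw [e1, e2, Real.sin_two_mul, abs_mul, abs_mul]
        rw [abs_of_nonneg (by norm_num : (0:ℝ) ≤ 2), abs_of_pos hs]
        nlinarith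
    · have ihh := ih hk2
      have e : ((k+1:ℕ):ℝ)*θ = (k:ℝ)*θ + θ := by push_cast; ring
      rw [e, Real.sin_add]
      have hb := abs_add_le (Real.sin ((k:ℝ)*θ) * Real.cos θ) (Real.cos ((k:ℝ)*θ) * Real.sin θ)
      rw [abs_mul, abs_mul, abs_of_pos hs] at hb
      have h3 : |Real.cos ((k:ℝ)*θ)| ≤ 1 := Real.abs_cos_le_one _
      have h4 : (0:ℝ) ≤ |Real.sin ((k:ℝ)*θ)| := abs_nonneg _
      push_cast
      push_cast at hb ihh
      nlinarith [hcabs.le, abs_nonneg (Real.cos ((k:ℝ)*θ))]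

-- k cos kθ sin θ ≤ sin kθ cos θ, strict for k ≥ 2
lemma my_key_ineq {θ : ℝ} (h1 : 0 < θ) (h2 : θ < π/2) :
    ∀ k : ℕ, 1 ≤ k → (k:ℝ)*θ < π →
      ((k:ℝ) * Real.cos ((k:ℝ)*θ) * Real.sin θ ≤ Real.sin ((k:ℝ)*θ) * Real.cos θ ∧
       (2 ≤ k → (k:ℝ) * Real.cos ((k:ℝ)*θ) * Real.sin θ < Real.sin ((k:ℝ)*θ) * Real.cos θ)) := by
  have hs : 0 < Real.sin θ := Real.sin_pos_of_pos_of_lt_pi h1 (h2.trans (by linarith [Real.pi_pos]))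
  have hc : 0 < Real.cos θ := Real.cos_pos_of_mem_Ioo ⟨by linarith [Real.pi_pos], h2⟩
  intro k hk
  induction k with
  | zero => omega
  | succ k ih =>
    intro hklt
    rcases Nat.eq_or_lt_of_le hk with hk1 | hk1
    · -- k+1 = 1
      have : k = 0 := by omega
      subst this
      refine ⟨by push_cast; norm_num; linarith [mul_comm (Real.cos θ) (Real.sin θ)], fun h => absurd h (by norm_num)⟩
    · have hk' : 1 ≤ k := by omega
      have hkθ : (k:ℝ)*θ < π := by
        have : (k:ℝ)*θ < ((k+1:ℕ):ℝ)*θ := by push_cast; nlinarith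
        linarith
      obtain ⟨ihle, _⟩ := ih hk' hkθ
      have hsk : 0 < Real.sin ((k:ℝ)*θ) := by
        apply Real.sin_pos_of_pos_of_lt_pi (by positivity) hkθ
      have e : ((k+1:ℕ):ℝ)*θ = (k:ℝ)*θ + θ := by push_cast; ring
      have strict : ((k+1:ℕ):ℝ) * Real.cos (((k+1:ℕ):ℝ)*θ) * Real.sin θ
          < Real.sin (((k+1:ℕ):ℝ)*θ) * Real.cos θ := by
        rw [e, Real.sin_add, Real.cos_add]
        push_cast
        nlinarith [mul_le_mul_of_nonneg_right ihle hc.le, mul_pos (mul_pos hsk hs) hs,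
          mul_pos hs hc]
      exact ⟨strict.le, fun _ => strict⟩


lemma my_eval_formula (n : ℕ) (hn : 1 ≤ n) (x : ℝ) (hx1 : -1 < x) (hx2 : x < 1) :
    (U ℝ ((n:ℤ)-1)).eval x
      = Real.sin ((n:ℝ) * Real.arccos x) / Real.sin (Real.arccos x) := by
  have hs : 0 < Real.sin (Real.arccos x) := by
    rw [Real.sin_arccos]
    apply Real.sqrt_pos.2
    nlinarith
  have h := U_real_cos (Real.arccos x) ((n:ℤ)-1)
  rw [Real.cos_arccos hx1.le hx2.le] at h
  push_cast at h
  rw [sub_add_cancel] at h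
  field_simp
  linarith [h]

lemma my_f_anti (n : ℕ) (hn : 3 ≤ n) :
    StrictAntiOn (fun θ : ℝ => Real.sin ((n:ℝ)*θ) / Real.sin θ) (Set.Ioc 0 (π/n)) := by
  have hπ := Real.pi_pos
  have hn0 : (0:ℝ) < n := by positivity
  have hn3 : (3:ℝ) ≤ n := by exact_mod_cast hn
  have hπn : π/n < π := div_lt_self hπ (by linarith)
  have hπn2 : π/n ≤ π/3 := by
    apply div_le_div_of_nonneg_left hπ.le (by norm_num) hn3
  have hsinpos : ∀ θ ∈ Set.Ioc (0:ℝ) (π/n), 0 < Real.sin θ := by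
    intro θ hθ
    exact Real.sin_pos_of_pos_of_lt_pi hθ.1 (lt_of_le_of_lt hθ.2 hπn)
  apply strictAntiOn_of_deriv_neg (convex_Ioc _ _)
  · apply ContinuousOn.div
    · exact (Real.continuous_sin.comp (continuous_const.mul continuous_id)).continuousOn
    · exact Real.continuous_sin.continuousOn
    · exact fun θ hθ => (hsinpos θ hθ).ne'
  · intro θ hθ
    rw [interior_Ioc] at hθ
    obtain ⟨hθ0, hθ1⟩ := hθ
    have hs := hsinpos θ ⟨hθ0, hθ1.le⟩
    have h1 : HasDerivAt (fun t : ℝ => Real.sin ((n:ℝ)*t))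
        (Real.cos ((n:ℝ)*θ) * ((n:ℝ)*1)) θ := ((hasDerivAt_id θ).const_mul (n:ℝ)).sin
    have hdiv := h1.div (Real.hasDerivAt_sin θ) hs.ne'
    rw [show (fun θ : ℝ => Real.sin ((n:ℝ)*θ) / Real.sin θ) = (fun t : ℝ => Real.sin ((n:ℝ)*t)) / Real.sin from rfl, hdiv.deriv]
    apply div_neg_of_neg_of_pos
    · have hθ2 : θ < π/2 := by linarith
      have hnθ : (n:ℝ)*θ < π := by
        have := (lt_div_iff₀ hn0).1 hθ1
        nlinarith
      have key := (my_key_ineq hθ0 hθ2 n (by omega) hnθ).2 (by omega)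
      nlinarith
    · positivity

lemma my_strict_mono (n : ℕ) (hn : 3 ≤ n) :
    StrictMonoOn (fun x : ℝ => (U ℝ ((n:ℤ)-1)).eval x) (Set.Icc (Real.cos (π/n)) 1) := by
  have hπ := Real.pi_pos
  have hn0 : (0:ℝ) < n := by positivity
  have hn3 : (3:ℝ) ≤ n := by exact_mod_cast hn
  have hπn : π/n < π := div_lt_self hπ (by linarith)
  have hπnpos : 0 < π/n := by positivity
  have hπn2 : π/n ≤ π/3 := div_le_div_of_nonneg_left hπ.le (by norm_num) hn3
  have hc1 : Real.cos (π/n) < 1 := by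
    have := Real.strictAntiOn_cos (Set.mem_Icc.2 ⟨le_refl 0, hπ.le⟩)
      (Set.mem_Icc.2 ⟨hπnpos.le, hπn.le⟩) hπnpos
    simpa using this
  have hcpos : 0 < Real.cos (π/n) := Real.cos_pos_of_mem_Ioo
    ⟨by linarith, by linarith⟩
  intro a ha b hb hab
  obtain ⟨ha1, ha2⟩ := Set.mem_Icc.1 ha
  obtain ⟨hb1, hb2⟩ := Set.mem_Icc.1 hb
  have han1 : -1 < a := by linarith
  have ha2' : a < 1 := lt_of_lt_of_le hab hb2
  -- facts about arccos a
  set θa := Real.arccos a with hθa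
  have hθa0 : 0 < θa := Real.arccos_pos.2 ha2'
  have hθaπ : θa ≤ π/n := by
    rw [hθa, show π/n = Real.arccos (Real.cos (π/n)) from
      (Real.arccos_cos hπnpos.le hπn.le).symm]
    exact (Real.strictAntiOn_arccos.le_iff_ge ⟨han1.le, ha2'.le⟩
      ⟨by linarith, by linarith⟩).2 ha1
  have hsa : 0 < Real.sin θa := Real.sin_pos_of_pos_of_lt_pi hθa0 (by linarith)
  have hfa : (U ℝ ((n:ℤ)-1)).eval a = Real.sin ((n:ℝ)*θa) / Real.sin θa :=
    my_eval_formula n (by omega) a han1 ha2'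
  rcases eq_or_lt_of_le hb2 with hb1' | hb1'
  · -- b = 1
    have hP1 : (U ℝ ((n:ℤ)-1)).eval b = (n:ℝ) := by
      rw [hb1']
      have e : (n:ℤ)-1 = ((n-1:ℕ):ℤ) := by omega
      rw [e, myU_eval_one (n-1)]
      have : ((n-1:ℕ):ℝ) = (n:ℝ) - 1 := by
        rw [Nat.cast_sub (by omega)]; norm_num
      rw [this]; ring
    simp only [hP1, hfa]
    rw [div_lt_iff₀ hsa]
    calc Real.sin ((n:ℝ)*θa) ≤ |Real.sin ((n:ℝ)*θa)| := le_abs_self _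
      _ < (n:ℝ) * Real.sin θa := my_abs_sin_lt hθa0 (by linarith) n (by omega)
  · -- b < 1
    set θb := Real.arccos b with hθb
    have hθb0 : 0 < θb := Real.arccos_pos.2 hb1'
    have hθbπ : θb ≤ π/n := by
      rw [hθb, show π/n = Real.arccos (Real.cos (π/n)) from
        (Real.arccos_cos hπnpos.le hπn.le).symm]
      exact (Real.strictAntiOn_arccos.le_iff_ge ⟨by linarith, hb1'.le⟩
        ⟨by linarith, by linarith⟩).2 hb1
    have hfb : (U ℝ ((n:ℤ)-1)).eval b = Real.sin ((n:ℝ)*θb) / Real.sin θb :=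
      my_eval_formula n (by omega) b (by linarith) hb1'
    have hθba : θb < θa :=
      Real.strictAntiOn_arccos ⟨han1.le, ha2'.le⟩ ⟨by linarith, hb1'.le⟩ hab
    have := my_f_anti n hn (Set.mem_Ioc.2 ⟨hθb0, hθbπ⟩) (Set.mem_Ioc.2 ⟨hθa0, hθaπ⟩) hθba
    simp only [hfa, hfb]
    exact this


theorem exists_unique_x0 (n : ℕ) (hn : 3 ≤ n) (Nmin N : ℝ)
    (hNmin : IsGreatest ((fun x : ℝ => |(U ℝ ((n : ℤ) - 1)).eval x|) ''
      Set.Icc (-(Real.cos (π / n))) (Real.cos (π / n))) Nmin)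
    (hN₁ : Nmin < N) (hN₂ : N < n) :
    (∃! x₀ : ℝ, x₀ ∈ Set.Ioo (0 : ℝ) 1 ∧ |(U ℝ ((n : ℤ) - 1)).eval x₀| = N) ∧
    (∀ x₀ : ℝ, x₀ ∈ Set.Ioo (0 : ℝ) 1 → |(U ℝ ((n : ℤ) - 1)).eval x₀| = N →
      (∀ x ∈ Set.Ioo (-1 : ℝ) 0, |(U ℝ ((n : ℤ) - 1)).eval x| = N ↔ x = -x₀) ∧
      (∀ x : ℝ, |x| < x₀ → |(U ℝ ((n : ℤ) - 1)).eval x| < N) ∧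
      (∀ x : ℝ, x₀ < |x| → |x| ≤ 1 → N < |(U ℝ ((n : ℤ) - 1)).eval x|)) := by
  have hπ := Real.pi_pos
  set P : ℝ → ℝ := fun x => (U ℝ ((n:ℤ)-1)).eval x with hPdef
  set c : ℝ := Real.cos (π/n) with hcdef
  have hn0 : (0:ℝ) < n := by positivity
  have hn3 : (3:ℝ) ≤ n := by exact_mod_cast hn
  have hπn : π/n < π := div_lt_self hπ (by linarith)
  have hπnpos : 0 < π/n := by positivity
  have hπn2 : π/n ≤ π/3 := div_le_div_of_nonneg_left hπ.le (by norm_num) hn3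
  have hc1 : c < 1 := by
    have := Real.strictAntiOn_cos (Set.mem_Icc.2 ⟨le_refl 0, hπ.le⟩)
      (Set.mem_Icc.2 ⟨hπnpos.le, hπn.le⟩) hπnpos
    simpa using this
  have hcpos : 0 < c := Real.cos_pos_of_mem_Ioo ⟨by linarith, by linarith⟩
  have hmono := my_strict_mono n hn
  have hsinπn : 0 < Real.sin (π/n) := Real.sin_pos_of_pos_of_lt_pi hπnpos hπn
  -- P c = 0
  have hPc : P c = 0 := by
    have h := U_real_cos (π/n) ((n:ℤ)-1)
    push_cast at h
    rw [sub_add_cancel] at h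
    have e : (n:ℝ) * (π/n) = π := by field_simp
    rw [e, Real.sin_pi] at h
    exact (mul_eq_zero.1 h).resolve_right hsinπn.ne'
  -- P 1 = n
  have hP1 : P 1 = (n:ℝ) := by
    have e : (n:ℤ)-1 = ((n-1:ℕ):ℤ) := by omega
    show (U ℝ ((n:ℤ)-1)).eval 1 = (n:ℝ)
    rw [e, myU_eval_one (n-1), Nat.cast_sub (by omega)]
    norm_num
  -- bound on [-c,c]
  have hbound : ∀ x : ℝ, -c ≤ x → x ≤ c → |P x| ≤ Nmin := fun x h1 h2 =>
    hNmin.2 ⟨x, Set.mem_Icc.2 ⟨h1, h2⟩, rfl⟩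
  have hNmin0 : 0 ≤ Nmin := le_trans (abs_nonneg _) (hbound 0 (by linarith) hcpos.le)
  have hNpos : 0 < N := lt_of_le_of_lt hNmin0 hN₁
  -- parity
  have hpar : ∀ x : ℝ, |P (-x)| = |P x| := by
    intro x
    have e : (n:ℤ)-1 = ((n-1:ℕ):ℤ) := by omega
    show |(U ℝ ((n:ℤ)-1)).eval (-x)| = |(U ℝ ((n:ℤ)-1)).eval x|
    rw [e, myU_eval_neg x (n-1), abs_mul, abs_pow, abs_neg, abs_one, one_pow, one_mul]
  have habs_abs : ∀ x : ℝ, |P (|x|)| = |P x| := by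
    intro x
    rcases abs_choice x with h | h
    · rw [h]
    · rw [h]; exact hpar x
  -- positivity of P on (c, 1)
  have hPpos : ∀ y : ℝ, c < y → y < 1 → 0 < P y := by
    intro y h1 h2
    have hy1 : -1 < y := by linarith
    have harcc : Real.arccos c = π/n := Real.arccos_cos hπnpos.le hπn.le
    have harc : Real.arccos y < π/n := by
      have := Real.strictAntiOn_arccos (Set.mem_Icc.2 ⟨by linarith, hc1.le⟩)
        (Set.mem_Icc.2 ⟨by linarith, h2.le⟩) h1
      rwa [harcc] at this
    have harc0 : 0 < Real.arccos y := Real.arccos_pos.2 h2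
    have h3 : (0:ℝ) < (n:ℝ) * Real.arccos y := by positivity
    have h4 : (n:ℝ) * Real.arccos y < π := by
      calc (n:ℝ) * Real.arccos y < (n:ℝ) * (π/n) := by
            exact (mul_lt_mul_iff_right₀ hn0).2 harc
        _ = π := by field_simp
    show 0 < (U ℝ ((n:ℤ)-1)).eval y
    rw [my_eval_formula n (by omega) y hy1 h2]
    exact div_pos (Real.sin_pos_of_pos_of_lt_pi h3 h4)
      (Real.sin_pos_of_pos_of_lt_pi harc0 (by linarith))
  -- any solution in (0,1) lies in (c,1) and has P y = N
  have hsolve : ∀ y : ℝ, y ∈ Set.Ioo (0:ℝ) 1 → |P y| = N → c < y ∧ P y = N := by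
    intro y hy habs
    obtain ⟨hy0, hy1⟩ := hy
    have hyc : c < y := by
      by_contra h
      push_neg at h
      have := hbound y (by linarith) h
      rw [habs] at this
      linarith
    exact ⟨hyc, by rwa [abs_of_pos (hPpos y hyc hy1)] at habs⟩
  have huniq : ∀ y z : ℝ, y ∈ Set.Ioo (0:ℝ) 1 → z ∈ Set.Ioo (0:ℝ) 1 →
      |P y| = N → |P z| = N → y = z := by
    intro y z hy hz h1 h2
    obtain ⟨hyc, hyP⟩ := hsolve y hy h1
    obtain ⟨hzc, hzP⟩ := hsolve z hz h2
    exact hmono.injOn (Set.mem_Icc.2 ⟨hyc.le, hy.2.le⟩)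
      (Set.mem_Icc.2 ⟨hzc.le, hz.2.le⟩) (hyP.trans hzP.symm)
  -- existence
  have hcont : ContinuousOn P (Set.Icc c 1) :=
    ((U ℝ ((n:ℤ)-1)).continuous).continuousOn
  obtain ⟨x₀, hx₀mem, hx₀P⟩ :=
    intermediate_value_Ioo hc1.le hcont (Set.mem_Ioo.2 (by rw [hPc, hP1]; exact ⟨hNpos, hN₂⟩))
  have hx₀Ioo : x₀ ∈ Set.Ioo (0:ℝ) 1 := ⟨lt_trans hcpos hx₀mem.1, hx₀mem.2⟩
  have hx₀abs : |P x₀| = N := by rw [hx₀P, abs_of_pos hNpos]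
  constructor
  · exact ⟨x₀, ⟨hx₀Ioo, hx₀abs⟩, fun y hy => huniq y x₀ hy.1 hx₀Ioo hy.2 hx₀abs⟩
  · intro z hz hzabs
    obtain ⟨hzc, hzP⟩ := hsolve z hz hzabs
    refine ⟨?_, ?_, ?_⟩
    · intro x hx
      constructor
      · intro habs
        have hmx : -x ∈ Set.Ioo (0:ℝ) 1 := ⟨by linarith [hx.2], by linarith [hx.1]⟩
        have : |P (-x)| = N := by rw [hpar x]; exact habs
        have := huniq (-x) z hmx hz this hzabs
        linarith
      · intro hxe
        rw [hxe, show -z = -(z) from rfl]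
        rw [hpar z]
        exact hzabs
    · intro x hlt
      rw [← habs_abs x]
      rcases le_or_gt |x| c with h | h
      · exact lt_of_le_of_lt (hbound (|x|) (by linarith [abs_nonneg x]) h) hN₁
      · have hx1 : |x| < 1 := lt_trans hlt hz.2
        have hPxpos := hPpos (|x|) h hx1
        rw [abs_of_pos hPxpos, ← hzP]
        exact hmono (Set.mem_Icc.2 ⟨h.le, hx1.le⟩)
          (Set.mem_Icc.2 ⟨hzc.le, hz.2.le⟩) hlt
    · intro x hlt hle
      rw [← habs_abs x]
      have : P z < P (|x|) :=
        hmono (Set.mem_Icc.2 ⟨hzc.le, hz.2.le⟩)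
          (Set.mem_Icc.2 ⟨by linarith, hle⟩) hlt
      rw [hzP] at this
      exact lt_of_lt_of_le this (le_abs_self _)
end

section
/- Let n ≥ 3 be an integer, let N be real with N_min(n) < N < n (where N_min(n) is the maximum of |U_{n-1}| over [-cos(π/n), cos(π/n)]), and let u₀ = arccos(x₀) where x₀ is the unique positive root of |U_{n-1}(x)| = N. Define g(u) = N²·sin²(u) - sin²(nu). Then for u ∈ [-π, π]: g(u) > 0 when u₀ < |u| < π - u₀; g(u) = 0 when u ∈ {0, ±π, ±u₀, ±(π - u₀)}; and g(u) < 0 when 0 < |u| < u₀ or π - u₀ < |u| < π. -/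
open Polynomial Polynomial.Chebyshev Real

lemma pi_div_n_lt_pi (n : ℕ) (hn : 3 ≤ n) : π / n < π := by
  have hn0 : (0:ℝ) < n := by positivity
  rw [div_lt_iff₀ hn0]
  nlinarith [Real.pi_pos, show (3:ℝ) ≤ n by exact_mod_cast hn]

lemma h_hasDeriv (n : ℕ) (θ : ℝ) :
    HasDerivAt (fun θ : ℝ => Real.sin (n*θ) * Real.cos θ - n * Real.cos (n*θ) * Real.sin θ)
      ((n^2 - 1) * Real.sin (n*θ) * Real.sin θ) θ := by
  have h1 : HasDerivAt (fun θ : ℝ => Real.sin (n*θ)) (Real.cos (n*θ) * n) θ :=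
    (Real.hasDerivAt_sin _).comp θ (by simpa using (hasDerivAt_id θ).const_mul (n:ℝ))
  have h2 : HasDerivAt (fun θ : ℝ => Real.cos (n*θ)) (-Real.sin (n*θ) * n) θ :=
    (Real.hasDerivAt_cos _).comp θ (by simpa using (hasDerivAt_id θ).const_mul (n:ℝ))
  have := ((h1.mul (Real.hasDerivAt_cos θ)).sub
    (((h2.const_mul (n:ℝ))).mul (Real.hasDerivAt_sin θ)))
  exact this.congr_deriv (by ring)

lemma h_pos (n : ℕ) (hn : 3 ≤ n) {θ : ℝ} (h1 : 0 < θ) (h2 : θ < π/n) :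
    0 < Real.sin (n*θ) * Real.cos θ - n * Real.cos (n*θ) * Real.sin θ := by
  have hn0 : (0:ℝ) < n := by positivity
  set h : ℝ → ℝ := fun θ : ℝ => Real.sin (n*θ) * Real.cos θ - n * Real.cos (n*θ) * Real.sin θ with hh
  have hmono : StrictMonoOn h (Set.Icc 0 (π/n)) := by
    apply strictMonoOn_of_deriv_pos (convex_Icc 0 (π/n))
    · exact fun x _ => ((h_hasDeriv n x).continuousAt).continuousWithinAt
    · intro x hx
      rw [interior_Icc] at hx
      rw [(h_hasDeriv n x).deriv]
      have hx1 : 0 < x := hx.1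
      have hxπ : x < π := lt_trans hx.2 (pi_div_n_lt_pi n hn)
      have hsx : 0 < Real.sin x := Real.sin_pos_of_pos_of_lt_pi hx1 hxπ
      have hsnx : 0 < Real.sin (n*x) := by
        apply Real.sin_pos_of_pos_of_lt_pi (by positivity)
        calc (n:ℝ) * x < n * (π/n) := by nlinarith [hx.2]
        _ = π := by field_simp
      have hnn : (1:ℝ) < (n:ℝ)^2 := by nlinarith [show (3:ℝ) ≤ n by exact_mod_cast hn]
      exact mul_pos (mul_pos (by linarith) hsnx) hsx
  have := hmono (Set.mem_Icc.2 ⟨le_refl 0, by positivity⟩)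
    (Set.mem_Icc.2 ⟨le_of_lt h1, le_of_lt h2⟩) h1
  simpa [hh] using this

lemma ratio_anti (n : ℕ) (hn : 3 ≤ n) :
    StrictAntiOn (fun θ => Real.sin (n*θ) / Real.sin θ) (Set.Ioc 0 (π/n)) := by
  have hπ := pi_div_n_lt_pi n hn
  apply strictAntiOn_of_deriv_neg (convex_Ioc 0 (π/n))
  · apply ContinuousOn.div
    · exact (Real.continuous_sin.comp (continuous_const.mul continuous_id)).continuousOn
    · exact Real.continuous_sin.continuousOn
    · intro x hx
      exact ne_of_gt (Real.sin_pos_of_pos_of_lt_pi hx.1 (lt_of_le_of_lt hx.2 hπ))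
  · intro x hx
    rw [interior_Ioc] at hx
    have hx1 : 0 < x := hx.1
    have hxπ : x < π := lt_trans hx.2 hπ
    have hsx : 0 < Real.sin x := Real.sin_pos_of_pos_of_lt_pi hx1 hxπ
    have h1 : HasDerivAt (fun θ : ℝ => Real.sin (n*θ)) (Real.cos (n*x) * n) x :=
      (Real.hasDerivAt_sin _).comp x (by simpa using (hasDerivAt_id x).const_mul (n:ℝ))
    have hd := h1.div (Real.hasDerivAt_sin x) (ne_of_gt hsx)
    rw [show deriv (fun θ : ℝ => Real.sin (n*θ) / Real.sin θ) x = _ from hd.deriv]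
    apply div_neg_of_neg_of_pos _ (by positivity)
    have := h_pos n hn hx1 hx.2
    nlinarith

set_option maxHeartbeats 2000000 in
theorem g_sign_of_N_lt_n (n : ℕ) (hn : 3 ≤ n) (Nmin N : ℝ)
    (hNmin : IsGreatest ((fun x : ℝ => |(U ℝ ((n : ℤ) - 1)).eval x|) ''
      Set.Icc (-(Real.cos (π / n))) (Real.cos (π / n))) Nmin)
    (hN₁ : Nmin < N) (hN₂ : N < n)
    (x₀ : ℝ) (hx₀ : x₀ ∈ Set.Ioo (0 : ℝ) 1)
    (hx₀N : |(U ℝ ((n : ℤ) - 1)).eval x₀| = N)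
    (u₀ : ℝ) (hu₀ : u₀ = Real.arccos x₀)
    (g : ℝ → ℝ)
    (hg : ∀ u : ℝ, g u = N ^ 2 * Real.sin u ^ 2 - Real.sin (n * u) ^ 2) :
    (∀ u : ℝ, -π ≤ u → u ≤ π → u₀ < |u| → |u| < π - u₀ → 0 < g u) ∧
    (∀ u : ℝ, u ∈ ({0, π, -π, u₀, -u₀, π - u₀, -(π - u₀)} : Set ℝ) → g u = 0) ∧
    (∀ u : ℝ, -π ≤ u → u ≤ π →
      (0 < |u| ∧ |u| < u₀) ∨ (π - u₀ < |u| ∧ |u| < π) → g u < 0) := by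
  have hn0 : (0:ℝ) < n := by exact_mod_cast (by omega : 0 < n)
  have hπ := Real.pi_pos
  have hn3 : (3:ℝ) ≤ n := by exact_mod_cast hn
  have hπn0 : 0 < π/n := by positivity
  have hπnπ : π/n < π := pi_div_n_lt_pi n hn
  have hπn2 : π/n < π/2 := by
    rw [div_lt_div_iff₀ hn0 (by norm_num : (0:ℝ) < 2)]
    nlinarith
  have hcπn : 0 < Real.cos (π/n) := Real.cos_pos_of_mem_Ioo ⟨by linarith, hπn2⟩
  have hNmin0 : 0 ≤ Nmin := by
    have hmem : Real.cos (π/n) ∈ Set.Icc (-(Real.cos (π / n))) (Real.cos (π / n)) :=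
      ⟨by linarith, le_refl _⟩
    have h2 : |(U ℝ ((n : ℤ) - 1)).eval (Real.cos (π/n))| ≤ Nmin := hNmin.2 ⟨Real.cos (π/n), hmem, rfl⟩
    exact le_trans (abs_nonneg _) h2
  have hN0 : 0 < N := lt_of_le_of_lt hNmin0 hN₁
  obtain ⟨hx₀0, hx₀1⟩ := hx₀
  -- x₀ is above cos(π/n)
  have hx₀c : Real.cos (π/n) < x₀ := by
    by_contra h
    push_neg at h
    have hmem : x₀ ∈ Set.Icc (-(Real.cos (π / n))) (Real.cos (π / n)) := ⟨by linarith, h⟩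
    have h2 : |(U ℝ ((n : ℤ) - 1)).eval x₀| ≤ Nmin := hNmin.2 ⟨x₀, hmem, rfl⟩
    rw [hx₀N] at h2
    linarith
  have hu₀0 : 0 < u₀ := hu₀ ▸ Real.arccos_pos.2 hx₀1
  have hu₀π : u₀ ≤ π := hu₀ ▸ Real.arccos_le_pi x₀
  have hcosu₀ : Real.cos u₀ = x₀ := by
    rw [hu₀]; exact Real.cos_arccos (by linarith) (le_of_lt hx₀1)
  have hu₀n : u₀ < π/n := by
    have := Real.strictAntiOn_cos.lt_iff_gt
      (Set.mem_Icc.2 ⟨le_of_lt hπn0, le_of_lt hπnπ⟩)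
      (Set.mem_Icc.2 ⟨le_of_lt hu₀0, hu₀π⟩)
    rw [hcosu₀] at this
    exact this.1 hx₀c
  have hsinu₀ : 0 < Real.sin u₀ :=
    Real.sin_pos_of_pos_of_lt_pi hu₀0 (lt_trans hu₀n hπnπ)
  -- evaluation identity at any θ
  have hUeval : ∀ θ : ℝ, (U ℝ ((n : ℤ) - 1)).eval (Real.cos θ) * Real.sin θ
      = Real.sin (n * θ) := by
    intro θ
    have := Polynomial.Chebyshev.U_real_cos θ ((n : ℤ) - 1)
    simpa using this
  -- key : sin(n u₀) = N sin u₀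
  have hnu₀π : (n:ℝ) * u₀ < π := by
    calc (n:ℝ) * u₀ < n * (π/n) := by exact mul_lt_mul_of_pos_left hu₀n hn0
    _ = π := by field_simp
  have hsnu₀ : 0 < Real.sin ((n:ℝ) * u₀) :=
    Real.sin_pos_of_pos_of_lt_pi (by positivity) hnu₀π
  have key : Real.sin ((n:ℝ) * u₀) = N * Real.sin u₀ := by
    have h1 := hUeval u₀
    rw [hcosu₀] at h1
    have hpos : 0 < (U ℝ ((n : ℤ) - 1)).eval x₀ := by
      by_contra h
      push_neg at h
      have h4 : (U ℝ ((n : ℤ) - 1)).eval x₀ * Real.sin u₀ ≤ 0 :=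
        mul_nonpos_of_nonpos_of_nonneg h hsinu₀.le
      rw [h1] at h4
      linarith
    rw [abs_of_pos hpos] at hx₀N
    rw [← h1, hx₀N]
  -- reflection of sines
  have hcnπ : Real.cos ((n:ℝ) * π) ^ 2 = 1 := by
    have h1 := Real.sin_sq_add_cos_sq ((n:ℝ) * π)
    rw [Real.sin_nat_mul_pi] at h1
    nlinarith
  have hrefl : ∀ θ : ℝ, Real.sin ((n:ℝ) * (π - θ)) ^ 2 = Real.sin ((n:ℝ) * θ) ^ 2 := by
    intro θ
    have : (n:ℝ) * (π - θ) = (n:ℝ) * π - (n:ℝ) * θ := by ring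
    rw [this, Real.sin_sub, Real.sin_nat_mul_pi]
    nlinarith [hcnπ]
  have hreflabs : ∀ θ : ℝ, |Real.sin ((n:ℝ) * (π - θ))| = |Real.sin ((n:ℝ) * θ)| := by
    intro θ
    exact (sq_eq_sq_iff_abs_eq_abs _ _).1 (hrefl θ)
  -- case A : u₀ < t ≤ π/n
  have caseA : ∀ t : ℝ, u₀ < t → t ≤ π/n → |Real.sin ((n:ℝ) * t)| < N * Real.sin t := by
    intro t h1 h2
    have ht0 : 0 < t := lt_trans hu₀0 h1
    have htπ : t < π := lt_of_le_of_lt h2 hπnπ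
    have hst : 0 < Real.sin t := Real.sin_pos_of_pos_of_lt_pi ht0 htπ
    have hsnt : 0 ≤ Real.sin ((n:ℝ) * t) := by
      apply Real.sin_nonneg_of_nonneg_of_le_pi (by positivity)
      calc (n:ℝ) * t ≤ n * (π/n) := mul_le_mul_of_nonneg_left h2 hn0.le
      _ = π := by field_simp
    have hratio := ratio_anti n hn (Set.mem_Ioc.2 ⟨hu₀0, le_of_lt (lt_of_lt_of_le h1 h2)⟩)
      (Set.mem_Ioc.2 ⟨ht0, h2⟩) h1
    simp only at hratio
    rw [key] at hratio
    rw [abs_of_nonneg hsnt]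
    have : N * Real.sin u₀ / Real.sin u₀ = N := by field_simp
    rw [this] at hratio
    calc Real.sin ((n:ℝ)*t) = Real.sin ((n:ℝ)*t) / Real.sin t * Real.sin t := by field_simp
    _ < N * Real.sin t := by exact mul_lt_mul_of_pos_right hratio hst
  -- case B : π/n ≤ t ≤ π - π/n : Nmin bound
  have caseB : ∀ t : ℝ, π/n ≤ t → t ≤ π - π/n → |Real.sin ((n:ℝ) * t)| < N * Real.sin t := by
    intro t h1 h2
    have ht0 : 0 < t := lt_of_lt_of_le hπn0 h1
    have htπ : t < π := lt_of_le_of_lt h2 (by linarith)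
    have hst : 0 < Real.sin t := Real.sin_pos_of_pos_of_lt_pi ht0 htπ
    have hmemIcc : t ∈ Set.Icc (0:ℝ) π := ⟨le_of_lt ht0, le_of_lt htπ⟩
    have hcle : Real.cos t ≤ Real.cos (π/n) := by
      rcases eq_or_lt_of_le h1 with h | h
      · rw [← h]
      · exact le_of_lt (Real.cos_lt_cos_of_nonneg_of_le_pi (le_of_lt hπn0) (le_of_lt htπ) h)
    have hcge : -(Real.cos (π/n)) ≤ Real.cos t := by
      rw [← Real.cos_pi_sub]
      rcases eq_or_lt_of_le h2 with h | h
      · rw [h]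
      · exact le_of_lt (Real.cos_lt_cos_of_nonneg_of_le_pi (le_of_lt ht0) (by linarith) (by linarith))
    have hb : |(U ℝ ((n : ℤ) - 1)).eval (Real.cos t)| ≤ Nmin := hNmin.2 ⟨Real.cos t, ⟨hcge, hcle⟩, rfl⟩
    have h3 := hUeval t
    have : |Real.sin ((n:ℝ) * t)| = |(U ℝ ((n : ℤ) - 1)).eval (Real.cos t)| * Real.sin t := by
      rw [← h3, abs_mul, abs_of_pos hst]
    rw [this]
    calc |(U ℝ ((n : ℤ) - 1)).eval (Real.cos t)| * Real.sin t ≤ Nmin * Real.sin t :=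
      mul_le_mul_of_nonneg_right hb (le_of_lt hst)
    _ < N * Real.sin t := mul_lt_mul_of_pos_right hN₁ hst
  -- positive core
  have corePos : ∀ t : ℝ, u₀ < t → t < π - u₀ → |Real.sin ((n:ℝ) * t)| < N * Real.sin t := by
    intro t h1 h2
    rcases le_or_gt t (π/n) with h | h
    · exact caseA t h1 h
    rcases le_or_gt t (π - π/n) with h' | h'
    · exact caseB t (le_of_lt h) h'
    · have hs1 : u₀ < π - t := by linarith
      have hs2 : π - t ≤ π/n := by linarith
      have := caseA (π - t) hs1 hs2
      rw [← hreflabs t, ← Real.sin_pi_sub t]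
      exact this
  -- negative core on (0, u₀)
  have coreNegA : ∀ t : ℝ, 0 < t → t < u₀ → N * Real.sin t < Real.sin ((n:ℝ) * t) := by
    intro t h1 h2
    have htπn : t < π/n := lt_trans h2 hu₀n
    have hst : 0 < Real.sin t := Real.sin_pos_of_pos_of_lt_pi h1 (lt_trans htπn hπnπ)
    have hratio := ratio_anti n hn (Set.mem_Ioc.2 ⟨h1, le_of_lt htπn⟩)
      (Set.mem_Ioc.2 ⟨hu₀0, le_of_lt hu₀n⟩) h2
    simp only at hratio
    rw [key] at hratio
    have hNu : N * Real.sin u₀ / Real.sin u₀ = N := by field_simp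
    rw [hNu] at hratio
    calc N * Real.sin t < Real.sin ((n:ℝ)*t) / Real.sin t * Real.sin t :=
      mul_lt_mul_of_pos_right hratio hst
    _ = Real.sin ((n:ℝ)*t) := by field_simp
  have coreNeg : ∀ t : ℝ, (0 < t ∧ t < u₀) ∨ (π - u₀ < t ∧ t < π) →
      N ^ 2 * Real.sin t ^ 2 < Real.sin ((n:ℝ) * t) ^ 2 := by
    intro t ht
    rcases ht with ⟨h1, h2⟩ | ⟨h1, h2⟩
    · have := coreNegA t h1 h2
      have hst : 0 < Real.sin t :=
        Real.sin_pos_of_pos_of_lt_pi h1 (by linarith [lt_trans h2 hu₀n])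
      have h5 : (N * Real.sin t) ^ 2 < Real.sin ((n:ℝ) * t) ^ 2 :=
        pow_lt_pow_left₀ this (by positivity) (by norm_num)
      calc N ^ 2 * Real.sin t ^ 2 = (N * Real.sin t) ^ 2 := by ring
      _ < _ := h5
    · have hs1 : 0 < π - t := by linarith
      have hs2 : π - t < u₀ := by linarith
      have := coreNegA (π - t) hs1 hs2
      have hst : 0 < Real.sin (π - t) :=
        Real.sin_pos_of_pos_of_lt_pi hs1 (by linarith [lt_trans hs2 hu₀n, hπnπ])
      have hr := hrefl t
      rw [Real.sin_pi_sub] at this hst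
      have h5 : (N * Real.sin t) ^ 2 < Real.sin ((n:ℝ) * (π - t)) ^ 2 :=
        pow_lt_pow_left₀ this (by positivity) (by norm_num)
      rw [hr] at h5
      calc N ^ 2 * Real.sin t ^ 2 = (N * Real.sin t) ^ 2 := by ring
      _ < _ := h5
  -- g depends only on |u|
  have gAbs : ∀ u : ℝ, g u = N ^ 2 * Real.sin |u| ^ 2 - Real.sin ((n:ℝ) * |u|) ^ 2 := by
    intro u
    rw [hg]
    rcases abs_cases u with ⟨h, _⟩ | ⟨h, _⟩
    · rw [h]
    · rw [h, mul_neg, Real.sin_neg, Real.sin_neg, neg_sq, neg_sq]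
  refine ⟨?_, ?_, ?_⟩
  · intro u _ _ h1 h2
    rw [gAbs u]
    have := corePos |u| h1 h2
    have h0 := abs_nonneg (Real.sin ((n:ℝ) * |u|))
    nlinarith [sq_abs (Real.sin ((n:ℝ) * |u|))]
  · intro u hu
    have hzero : ∀ t : ℝ, Real.sin ((n:ℝ) * t) ^ 2 = N ^ 2 * Real.sin t ^ 2 → g t = 0 := by
      intro t ht; rw [hg, ht]; ring
    have hu₀z : Real.sin ((n:ℝ) * u₀) ^ 2 = N ^ 2 * Real.sin u₀ ^ 2 := by rw [key]; ring
    have habs : ∀ t : ℝ, g t = g |t| := by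
      intro t; rw [gAbs t, hg |t|]
    simp only [Set.mem_insert_iff, Set.mem_singleton_iff] at hu
    rcases hu with h | h | h | h | h | h | h <;> rw [h]
    · apply hzero; simp
    · apply hzero; rw [Real.sin_pi, Real.sin_nat_mul_pi]; ring
    · rw [habs, abs_neg, abs_of_pos hπ]
      apply hzero; rw [Real.sin_pi, Real.sin_nat_mul_pi]; ring
    · exact hzero u₀ hu₀z
    · rw [habs, abs_neg, abs_of_pos hu₀0]
      exact hzero u₀ hu₀z
    · apply hzero
      rw [hrefl u₀, Real.sin_pi_sub]
      exact hu₀z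
    · rw [habs, abs_neg, abs_of_pos (by linarith : (0:ℝ) < π - u₀)]
      apply hzero
      rw [hrefl u₀, Real.sin_pi_sub]
      exact hu₀z
  · intro u _ _ h
    rw [gAbs u]
    have := coreNeg |u| h
    linarith
end

section
/- Let α > 0 be real. The cubic equation λ·(λ - ρ - α²)² + π²α⁴/4 = 0 in λ has a repeated root if and only if ρ equals one of the three values ρ_c(m) = -α² - 3·(πα²/4)^{2/3}·exp(i·2mπ/3) for m ∈ {-1, 0, 1}; in that case the repeated root is the double root λ_c(m) = -(πα²/4)^{2/3}·exp(i·2mπ/3), whose absolute value is (πα²/4)^{2/3}. -/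
open Polynomial Real

theorem cubic_repeated_roots (α : ℝ) (hα : 0 < α) (ρ : ℂ)
    (P : ℂ[X])
    (hP : P = X * (X - C (ρ + (α : ℂ) ^ 2)) ^ 2 + C ((π : ℂ) ^ 2 * (α : ℂ) ^ 4 / 4))
    (ρc lc : ℤ → ℂ)
    (hρc : ∀ m : ℤ, ρc m = -(α : ℂ) ^ 2 -
      3 * ((π * α ^ 2 / 4 : ℝ) ^ ((2 : ℝ) / 3) : ℝ) * Complex.exp (Complex.I * (2 * m * π / 3)))
    (hlc : ∀ m : ℤ, lc m =
      -((π * α ^ 2 / 4 : ℝ) ^ ((2 : ℝ) / 3) : ℝ) * Complex.exp (Complex.I * (2 * m * π / 3))) :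
    ((∃ l : ℂ, 2 ≤ P.rootMultiplicity l) ↔ ∃ m ∈ ({-1, 0, 1} : Set ℤ), ρ = ρc m) ∧
    (∀ m ∈ ({-1, 0, 1} : Set ℤ), ρ = ρc m →
      2 ≤ P.rootMultiplicity (lc m) ∧
      ‖lc m‖ = (π * α ^ 2 / 4 : ℝ) ^ ((2 : ℝ) / 3)) := by
  set s : ℂ := ρ + (α:ℂ)^2 with hs
  set K : ℂ := (π : ℂ) ^ 2 * (α : ℂ) ^ 4 / 4 with hK
  set c : ℝ := (π * α ^ 2 / 4 : ℝ) ^ ((2 : ℝ) / 3) with hc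
  have hx : (0:ℝ) < π * α ^ 2 / 4 := by positivity
  have hcpos : 0 < c := Real.rpow_pos_of_pos hx _
  have hcr : c ^ 3 = (π * α ^ 2 / 4) ^ 2 := by
    rw [hc, ← Real.rpow_natCast ((π * α ^ 2 / 4) ^ ((2:ℝ)/3)) 3, ← Real.rpow_mul hx.le]
    norm_num
  have hK3 : K = 4 * (c:ℂ)^3 := by
    have h : ((c:ℝ)^3 : ℂ) = (((π * α ^ 2 / 4) ^ 2 : ℝ) : ℂ) := by norm_cast
    push_cast at h
    rw [hK]
    linear_combination (-4 : ℂ) * h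
  have hKne : K ≠ 0 := by
    rw [hK]
    have h1 : (π:ℂ) ≠ 0 := by exact_mod_cast Real.pi_ne_zero
    have h2 : (α:ℂ) ≠ 0 := by exact_mod_cast hα.ne'
    simp [h1, h2]
  have hPne : P ≠ 0 := by
    intro h
    have h0 : P.eval s = 0 := by rw [h]; simp
    rw [hP] at h0
    simp at h0
    exact hKne h0
  have hder : P.derivative = (X - C s) * (3 * X - C s) := by
    rw [hP]
    simp [derivative_mul, derivative_pow, map_ofNat]
    ring
  have hcrit : ∀ l : ℂ, 2 ≤ P.rootMultiplicity l ↔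
      (l * (l - s)^2 + K = 0 ∧ (l - s) * (3*l - s) = 0) := by
    intro l
    rw [show (2:ℕ) ≤ P.rootMultiplicity l ↔ 1 < P.rootMultiplicity l from Iff.rfl,
      one_lt_rootMultiplicity_iff_isRoot hPne, hder, hP]
    simp [IsRoot]
  -- roots of unity
  set ω : ℂ := -(1/2 : ℂ) + ((Real.sqrt 3 / 2 : ℝ) : ℂ) * Complex.I with hω
  set ω' : ℂ := -(1/2 : ℂ) - ((Real.sqrt 3 / 2 : ℝ) : ℂ) * Complex.I with hω'
  have h3 : ((Real.sqrt 3 : ℝ) : ℂ)^2 = 3 := by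
    rw [show ((Real.sqrt 3 : ℝ):ℂ)^2 = ((Real.sqrt 3 ^ 2 : ℝ) : ℂ) by push_cast; ring]
    rw [Real.sq_sqrt (by norm_num : (3:ℝ) ≥ 0)]
    norm_num
  have hI : Complex.I^2 = -1 := Complex.I_sq
  have hsum : ω + ω' = -1 := by rw [hω, hω']; ring
  have hprod : ω * ω' = 1 := by
    rw [hω, hω']
    push_cast
    linear_combination (1/4 : ℂ) * h3 - (((Real.sqrt 3:ℝ):ℂ)^2/4) * hI
  have hω3 : ω^3 = 1 := by
    have h2 : ω^2 + ω + 1 = 0 := by linear_combination ω*hsum - hprod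
    linear_combination (ω - 1) * h2
  have hω'3 : ω'^3 = 1 := by
    have h2 : ω'^2 + ω' + 1 = 0 := by linear_combination ω'*hsum - hprod
    linear_combination (ω' - 1) * h2
  -- exp values
  have key : ∀ t : ℝ, Complex.exp (Complex.I * t) = (Real.cos t : ℂ) + (Real.sin t : ℂ) * Complex.I := by
    intro t
    rw [mul_comm, Complex.exp_mul_I, ← Complex.ofReal_cos, ← Complex.ofReal_sin]
  have hcos : Real.cos (2*π/3) = -(1/2) := by
    rw [show (2*π/3 : ℝ) = π - π/3 by ring, Real.cos_pi_sub, Real.cos_pi_div_three]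
  have hsin : Real.sin (2*π/3) = Real.sqrt 3 / 2 := by
    rw [show (2*π/3 : ℝ) = π - π/3 by ring, Real.sin_pi_sub, Real.sin_pi_div_three]
  have hE0 : Complex.exp (Complex.I * (2 * ((0:ℤ):ℂ) * π / 3)) = 1 := by
    norm_num
  have hE1 : Complex.exp (Complex.I * (2 * ((1:ℤ):ℂ) * π / 3)) = ω := by
    rw [show (Complex.I * (2 * ((1:ℤ):ℂ) * π / 3)) = Complex.I * ((2*π/3 : ℝ) : ℂ) by
      push_cast; ring, key, hcos, hsin, hω]
    push_cast; ring
  have hEm1 : Complex.exp (Complex.I * (2 * ((-1:ℤ):ℂ) * π / 3)) = ω' := by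
    rw [show (Complex.I * (2 * ((-1:ℤ):ℂ) * π / 3)) = Complex.I * ((-(2*π/3) : ℝ) : ℂ) by
      push_cast; ring, key, Real.cos_neg, Real.sin_neg, hcos, hsin, hω']
    push_cast; ring
  have habs : ∀ m : ℤ, ‖Complex.exp (Complex.I * (2 * (m:ℂ) * π / 3))‖ = 1 := by
    intro m
    rw [show Complex.I * (2*(m:ℂ)*↑π/3) = ((2*m*π/3 : ℝ):ℂ) * Complex.I by push_cast; ring,
      Complex.norm_exp_ofReal_mul_I]
  constructor
  · constructor
    · rintro ⟨l, hl⟩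
      rw [hcrit l] at hl
      obtain ⟨heval, hderiv⟩ := hl
      rcases mul_eq_zero.mp hderiv with h1 | h2
      · exfalso
        apply hKne
        have hls : l = s := by linear_combination h1
        rw [hls] at heval
        linear_combination heval
      · have hs3 : s = 3*l := by linear_combination -h2
        have h4 : 4*l^3 + K = 0 := by
          rw [hs3] at heval; linear_combination heval
        have hl3 : l^3 + (c:ℂ)^3 = 0 := by linear_combination h4/4 - hK3/4
        have hfac : (l + ↑c) * (l + ↑c*ω) * (l + ↑c*ω') = 0 := by
          linear_combination hl3 + (l+↑c)*↑c*l*hsum + (l+↑c)*↑c^2*hprod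
        rcases mul_eq_zero.mp hfac with hf | hf
        · rcases mul_eq_zero.mp hf with hf | hf
          · exact ⟨0, by simp, by rw [hρc 0, hE0]; linear_combination hs3 - hs + 3*hf⟩
          · exact ⟨1, by simp, by rw [hρc 1, hE1]; linear_combination hs3 - hs + 3*hf⟩
        · exact ⟨-1, by simp, by rw [hρc (-1), hEm1]; linear_combination hs3 - hs + 3*hf⟩
    · rintro ⟨m, hm, hρ⟩
      simp only [Set.mem_insert_iff, Set.mem_singleton_iff] at hm
      rcases hm with rfl | rfl | rfl
      · refine ⟨lc (-1), (hcrit _).mpr ?_⟩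
        rw [hlc (-1), hEm1]
        have hseq : s = -(3:ℂ)*↑c*ω' := by
          rw [hs, hρ, hρc (-1), hEm1]; ring
        rw [hseq]
        constructor
        · linear_combination hK3 - 4*(c:ℂ)^3*hω'3
        · ring
      · refine ⟨lc 0, (hcrit _).mpr ?_⟩
        rw [hlc 0, hE0]
        have hseq : s = -(3:ℂ)*↑c := by
          rw [hs, hρ, hρc 0, hE0]; ring
        rw [hseq]
        constructor
        · linear_combination hK3
        · ring
      · refine ⟨lc 1, (hcrit _).mpr ?_⟩
        rw [hlc 1, hE1]
        have hseq : s = -(3:ℂ)*↑c*ω := by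
          rw [hs, hρ, hρc 1, hE1]; ring
        rw [hseq]
        constructor
        · linear_combination hK3 - 4*(c:ℂ)^3*hω3
        · ring
  · intro m hm hρ
    simp only [Set.mem_insert_iff, Set.mem_singleton_iff] at hm
    have habs' : ‖lc m‖ = c := by
      rw [hlc m]
      rw [show (-(↑c:ℂ) * Complex.exp (Complex.I * (2 * m * π / 3)))
          = (-(↑c:ℂ)) * Complex.exp (Complex.I * (2 * m * π / 3)) by ring]
      rw [norm_mul, habs m, mul_one, norm_neg, Complex.norm_real, Real.norm_eq_abs, abs_of_nonneg hcpos.le]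
    refine ⟨?_, habs'⟩
    rcases hm with rfl | rfl | rfl
    · rw [hcrit]
      rw [hlc (-1), hEm1]
      have hseq : s = -(3:ℂ)*↑c*ω' := by rw [hs, hρ, hρc (-1), hEm1]; ring
      rw [hseq]
      exact ⟨by linear_combination hK3 - 4*(c:ℂ)^3*hω'3, by ring⟩
    · rw [hcrit]
      rw [hlc 0, hE0]
      have hseq : s = -(3:ℂ)*↑c := by rw [hs, hρ, hρc 0, hE0]; ring
      rw [hseq]
      exact ⟨by linear_combination hK3, by ring⟩
    · rw [hcrit]
      rw [hlc 1, hE1]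
      have hseq : s = -(3:ℂ)*↑c*ω := by rw [hs, hρ, hρc 1, hE1]; ring
      rw [hseq]
      exact ⟨by linear_combination hK3 - 4*(c:ℂ)^3*hω3, by ring⟩
end
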